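/- For every a ∈ (-1,1), both roots of the quadratic polynomial f(z) = z^2 + ((1+3a)/2) z + (1+a)/2 lie in the open unit disk. -/

import Mathlib

/-- For `a ∈ (-1,1)`, both roots of `z² + ((1+3a)/2) z + (1+a)/2` lie in the open unit disk. -/
theorem roots_in_open_disk (a : ℝ) (ha₁ : -1 < a) (ha₂ : a < 1) (z : ℂ)
    (hz : z ^ 2 + ((1 + 3 * (a : ℂ)) / 2) * z + (1 + (a : ℂ)) / 2 = 0) :
    ‖z‖ < 1 := by
  by_cases him : z.im = 0
  · -- z is real
    set x := z.re with hx
    have hzx : z = (x : ℂ) := by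
      apply Complex.ext <;> simp [him, hx]
    rw [hzx] at hz
    have hreal : x ^ 2 + ((1 + 3 * a) / 2) * x + (1 + a) / 2 = 0 := by
      exact_mod_cast hz
    have h1 : x < 1 := by nlinarith [sq_nonneg (x - 1), sq_nonneg (x + 1)]
    have h2 : -1 < x := by nlinarith [sq_nonneg (x - 1), sq_nonneg (x + 1)]
    rw [hzx, Complex.norm_real, Real.norm_eq_abs, abs_lt]
    exact ⟨h2, h1⟩
  · -- z is not real; conj z is also a root
    set w := (starRingEnd ℂ) z with hw
    have hz' : w ^ 2 + ((1 + 3 * (a : ℂ)) / 2) * w + (1 + (a : ℂ)) / 2 = 0 := by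
      have := congrArg (starRingEnd ℂ) hz
      simpa [map_add, map_mul, map_pow, map_div₀, map_ofNat] using this
    have hne : z ≠ w := by
      intro h
      have h2 := congrArg Complex.im h
      simp [hw] at h2
      exact him (by linarith)
    have hsum : z + w = -((1 + 3 * (a : ℂ)) / 2) := by
      have hfac : (z - w) * (z + w + ((1 + 3 * (a : ℂ)) / 2)) = 0 := by
        linear_combination hz - hz'
      rcases mul_eq_zero.mp hfac with h | h
      · exact absurd (sub_eq_zero.mp h) hne
      · linear_combination h
    have hprod : z * w = (1 + (a : ℂ)) / 2 := by
      linear_combination z * hsum - hz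
    have hns : (Complex.normSq z : ℂ) = (1 + (a : ℂ)) / 2 := by
      rw [← Complex.mul_conj]; exact hprod
    have hns' : Complex.normSq z = (1 + a) / 2 := by exact_mod_cast hns
    have habs : ‖z‖ ^ 2 = (1 + a) / 2 := by
      rw [← Complex.normSq_eq_norm_sq]; exact hns'
    nlinarith [norm_nonneg z]
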